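/- For a primitive n-th root of unity ω in a field of characteristic 0, and natural numbers k, s with 0 ≤ k, s ≤ n-1 and k + s ≥ n: ∑ ω^{∑_{j=2}^{s+1} i_j(j-1)} = 0, where the sum runs over all (s+1)-tuples (i_1,...,i_{s+1}) of nonnegative integers with i_1 + ... + i_{s+1} = k. -/

import Mathlib

open Finset

private def F {K : Type*} [Field K] (ω : K) (m k : ℕ) : K :=
  ∑ i ∈ Finset.Nat.antidiagonalTuple m k, ω ^ (∑ j : Fin m, i j * (j : ℕ))

private lemma sum_update_aux {m : ℕ} (i : Fin m → ℕ) (c : Fin m) (v : ℕ) (g : Fin m → ℕ → ℕ) :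
    ∑ j : Fin m, g j (Function.update i c v j) = g c v + ∑ j ∈ univ.erase c, g j (i j) := by
  rw [← Finset.add_sum_erase _ (fun j => g j (Function.update i c v j)) (mem_univ c)]
  congr 1
  · simp
  · exact Finset.sum_congr rfl fun j hj => by rw [Function.update_of_ne (mem_erase.1 hj).1]

private lemma pos_part {K : Type*} [Field K] (ω : K) (m k : ℕ) (c : Fin m) :
    ∑ i ∈ (Finset.Nat.antidiagonalTuple m (k+1)).filter (fun i => ¬ i c = 0),
      ω ^ (∑ j : Fin m, i j * (j : ℕ))
    = ω ^ (c : ℕ) * ∑ i ∈ Finset.Nat.antidiagonalTuple m k,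
      ω ^ (∑ j : Fin m, i j * (j : ℕ)) := by
  rw [Finset.mul_sum]
  refine Finset.sum_nbij' (fun i => Function.update i c (i c - 1))
    (fun i => Function.update i c (i c + 1)) ?_ ?_ ?_ ?_ ?_
  · intro a ha
    rw [mem_filter, Finset.Nat.mem_antidiagonalTuple] at ha
    rw [Finset.Nat.mem_antidiagonalTuple]
    rw [sum_update_aux a c _ (fun _ x => x)]
    rw [← Finset.add_sum_erase _ a (mem_univ c)] at ha
    omega
  · intro a ha
    rw [Finset.Nat.mem_antidiagonalTuple] at ha
    rw [mem_filter, Finset.Nat.mem_antidiagonalTuple]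
    rw [sum_update_aux a c _ (fun _ x => x)]
    rw [← Finset.add_sum_erase _ a (mem_univ c)] at ha
    constructor
    · omega
    · simp
  · intro a ha
    rw [mem_filter] at ha
    funext j
    rcases eq_or_ne j c with rfl | hj
    · simp; omega
    · simp [Function.update_of_ne hj]
  · intro a ha
    funext j
    rcases eq_or_ne j c with rfl | hj
    · simp
    · simp [Function.update_of_ne hj]
  · intro a ha
    rw [mem_filter] at ha
    rw [← pow_add]
    congr 1
    rw [sum_update_aux a c _ (fun j x => x * (j : ℕ))]
    rw [← Finset.add_sum_erase _ (fun j => a j * (j : ℕ)) (mem_univ c)]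
    obtain ⟨t, ht⟩ := Nat.exists_eq_succ_of_ne_zero ha.2
    rw [ht]
    simp only [Nat.succ_sub_one]
    rw [Nat.succ_mul]
    omega

private lemma first_zero {K : Type*} [Field K] (ω : K) (m k : ℕ) :
    ∑ i ∈ (Finset.Nat.antidiagonalTuple (m+1) k).filter (fun i => i 0 = 0),
      ω ^ (∑ j : Fin (m+1), i j * (j : ℕ))
    = ω ^ k * ∑ i ∈ Finset.Nat.antidiagonalTuple m k,
      ω ^ (∑ j : Fin m, i j * (j : ℕ)) := by
  rw [Finset.mul_sum]
  refine Finset.sum_nbij' Fin.tail (fun i => Fin.cons 0 i) ?_ ?_ ?_ ?_ ?_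
  · intro a ha
    rw [mem_filter, Finset.Nat.mem_antidiagonalTuple, Fin.sum_univ_succ] at ha
    rw [Finset.Nat.mem_antidiagonalTuple]
    simpa [ha.2, Fin.tail] using ha.1
  · intro a ha
    rw [Finset.Nat.mem_antidiagonalTuple] at ha
    rw [mem_filter, Finset.Nat.mem_antidiagonalTuple, Fin.sum_univ_succ]
    simpa using ha
  · intro a ha
    rw [mem_filter] at ha
    rw [← ha.2]
    exact Fin.cons_self_tail a
  · intro a _
    exact Fin.tail_cons (α := fun _ => ℕ) 0 a
  · intro a ha
    rw [mem_filter, Finset.Nat.mem_antidiagonalTuple, Fin.sum_univ_succ] at ha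
    rw [← pow_add]
    congr 1
    rw [Fin.sum_univ_succ]
    have h2 : ∀ j : Fin m, a j.succ * (j.succ : ℕ) = Fin.tail a j * (j : ℕ) + Fin.tail a j := by
      intro j
      simp [Fin.tail, Fin.val_succ, Nat.mul_succ]
    rw [Finset.sum_congr rfl fun j _ => h2 j, Finset.sum_add_distrib]
    have h3 : ∑ j : Fin m, Fin.tail a j = k := by
      have := ha.1
      rw [ha.2] at this
      simpa [Fin.tail] using this
    simp [ha.2, h3]
    omega

private lemma last_zero {K : Type*} [Field K] (ω : K) (m k : ℕ) :
    ∑ i ∈ (Finset.Nat.antidiagonalTuple (m+1) k).filter (fun i => i (Fin.last m) = 0),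
      ω ^ (∑ j : Fin (m+1), i j * (j : ℕ))
    = ∑ i ∈ Finset.Nat.antidiagonalTuple m k,
      ω ^ (∑ j : Fin m, i j * (j : ℕ)) := by
  refine Finset.sum_nbij' Fin.init (fun i => Fin.snoc i 0) ?_ ?_ ?_ ?_ ?_
  · intro a ha
    rw [mem_filter, Finset.Nat.mem_antidiagonalTuple, Fin.sum_univ_castSucc] at ha
    rw [Finset.Nat.mem_antidiagonalTuple]
    have := ha.1
    rw [ha.2] at this
    simpa [Fin.init] using this
  · intro a ha
    rw [Finset.Nat.mem_antidiagonalTuple] at ha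
    rw [mem_filter, Finset.Nat.mem_antidiagonalTuple, Fin.sum_univ_castSucc]
    simp [Fin.snoc_castSucc, ha]
  · intro a ha
    rw [mem_filter] at ha
    rw [← ha.2]
    exact Fin.snoc_init_self a
  · intro a _
    funext j
    simp [Fin.init]
  · intro a ha
    rw [mem_filter] at ha
    congr 1
    rw [Fin.sum_univ_castSucc, ha.2]
    simp [Fin.init]

private lemma recB {K : Type*} [Field K] (ω : K) (m k : ℕ) :
    F ω (m+1) (k+1) = F ω m (k+1) + ω ^ m * F ω (m+1) k := by
  rw [F, ← Finset.sum_filter_add_sum_filter_not _ (fun i => i (Fin.last m) = 0)]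
  rw [last_zero, pos_part ω (m+1) k (Fin.last m)]
  rw [Fin.val_last]
  rfl

private lemma recC {K : Type*} [Field K] (ω : K) (m k : ℕ) :
    F ω (m+1) (k+1) = ω ^ (k+1) * F ω m (k+1) + F ω (m+1) k := by
  rw [F, ← Finset.sum_filter_add_sum_filter_not _ (fun i => i 0 = 0)]
  rw [first_zero, pos_part ω (m+1) k 0]
  simp only [Fin.val_zero, pow_zero, one_mul]
  rfl

private lemma keyrec {K : Type*} [Field K] (ω : K) (m k : ℕ) :
    (1 - ω ^ (k+1)) * F ω (m+1) (k+1) = (1 - ω ^ (m+k+1)) * F ω (m+1) k := by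
  have hB := recB ω m k
  have hC := recC ω m k
  linear_combination hC - ω ^ (k+1) * hB

theorem composition_sum_eq_zero {K : Type*} [Field K] [CharZero K] {n : ℕ} (hn : 1 < n)
    {ω : K} (hω : IsPrimitiveRoot ω n) (k s : ℕ) (hk : k ≤ n - 1) (hs : s ≤ n - 1)
    (hks : n ≤ k + s) :
    ∑ i ∈ Finset.Nat.antidiagonalTuple (s + 1) k, ω ^ (∑ j : Fin (s + 1), i j * (j : ℕ)) = 0 := by
  suffices h : ∀ k, n ≤ k + s → k ≤ n - 1 → F ω (s+1) k = 0 by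
    have := h k hks hk
    rwa [F] at this
  intro k
  induction k with
  | zero => intro h1 h2; omega
  | succ k ih =>
    intro h1 h2
    obtain ⟨s', rfl⟩ : ∃ s', s = s' + 1 := ⟨s - 1, by omega⟩
    have hkey := keyrec ω (s' + 1) k
    have hne : (1 : K) - ω ^ (k+1) ≠ 0 := by
      rw [sub_ne_zero]
      intro h
      have := (hω.pow_eq_one_iff_dvd (k+1)).mp h.symm
      have := Nat.le_of_dvd (by omega) this
      omega
    have hz : (1 - ω ^ (s' + 1 + k + 1)) * F ω (s' + 1 + 1) k = 0 := by
      rcases eq_or_lt_of_le h1 with heq | hlt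
      · have : ω ^ (s' + 1 + k + 1) = 1 := by
          have : s' + 1 + k + 1 = n := by omega
          rw [this, hω.pow_eq_one]
        rw [this]
        ring
      · rw [ih (by omega) (by omega)]
        ring
    rw [hz] at hkey
    exact (mul_eq_zero.mp hkey).resolve_left hne
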